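/- Tensorization: let ζ_1,...,ζ_n be independent non-negative random variables and K, t_0 > 0. If P(ζ_k < t) ≤ Kt for all k = 1,...,n and all t ≥ t_0, then there is an absolute constant C such that P(∑_{k=1}^n ζ_k² < t²n) ≤ (CKt)^n for all t ≥ t_0. -/

import Mathlib

open MeasureTheory ProbabilityTheory

lemma aux_lintegral_prod {Ω : Type} [MeasurableSpace Ω] {μ : Measure Ω} [IsProbabilityMeasure μ]
    {n : ℕ} (g : Fin n → Ω → ENNReal) (hmeas : ∀ i, Measurable (g i))
    (hindep : iIndepFun g μ) (s : Finset (Fin n)) :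
    ∫⁻ ω, ∏ i ∈ s, g i ω ∂μ = ∏ i ∈ s, ∫⁻ ω, g i ω ∂μ := by
  classical
  induction s using Finset.induction_on with
  | empty => simp
  | @insert a s ha ih =>
    have hprodmeas : Measurable (fun ω => ∏ i ∈ s, g i ω) :=
      Finset.measurable_prod s fun i _ => hmeas i
    have hfn : (∏ j ∈ s, g j) = fun ω => ∏ j ∈ s, g j ω := by
      funext ω; simp [Finset.prod_apply]
    have hind : IndepFun (g a) (fun ω => ∏ j ∈ s, g j ω) μ := by
      have := (hindep.indepFun_finset_prod_of_notMem hmeas ha).symm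
      rwa [hfn] at this
    calc ∫⁻ ω, ∏ i ∈ insert a s, g i ω ∂μ
        = ∫⁻ ω, g a ω * ∏ i ∈ s, g i ω ∂μ := by
          simp [Finset.prod_insert ha]
      _ = (∫⁻ ω, g a ω ∂μ) * ∫⁻ ω, ∏ i ∈ s, g i ω ∂μ :=
          lintegral_mul_eq_lintegral_mul_lintegral_of_indepFun'' (hmeas a).aemeasurable
            hprodmeas.aemeasurable hind
      _ = ∏ i ∈ insert a s, ∫⁻ ω, g i ω ∂μ := by
          rw [ih, Finset.prod_insert ha]

theorem stmt11 :
    ∃ C : ℝ, 0 < C ∧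
      ∀ (Ω : Type) (_ : MeasurableSpace Ω) (μ : Measure Ω), IsProbabilityMeasure μ →
      ∀ (n : ℕ) (ζ : Fin n → Ω → ℝ) (K t₀ : ℝ), 0 < K → 0 < t₀ →
      (∀ i, Measurable (ζ i)) → (∀ i ω, 0 ≤ ζ i ω) →
      iIndepFun ζ μ →
      (∀ k t, t₀ ≤ t → μ {ω | ζ k ω < t} ≤ ENNReal.ofReal (K * t)) →
      ∀ t, t₀ ≤ t →
        μ {ω | ∑ k, ζ k ω ^ 2 < t ^ 2 * n} ≤ ENNReal.ofReal ((C * K * t) ^ n) := by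
  refine ⟨2 * Real.exp 2, by positivity, ?_⟩
  intro Ω mΩ μ hμ n ζ K t₀ hK ht₀ hmeas hnn hindep hball t ht
  have htpos : 0 < t := lt_of_lt_of_le ht₀ ht
  -- the exponential weights
  set g : Fin n → Ω → ENNReal :=
    fun k ω => ENNReal.ofReal (Real.exp (-(2 * ζ k ω / t))) with hg
  have hgmeas : ∀ k, Measurable (g k) := by
    intro k
    exact ENNReal.measurable_ofReal.comp
      (Real.measurable_exp.comp ((((hmeas k).const_mul 2).div_const t).neg))
  have hgindep : iIndepFun g μ := by
    have := hindep.comp (fun _ x => ENNReal.ofReal (Real.exp (-(2 * x / t))))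
      (fun _ => ENNReal.measurable_ofReal.comp
        (Real.measurable_exp.comp (((measurable_id.const_mul 2).div_const t).neg)))
    exact this
  -- Step 1: each factor has small lintegral
  have hint : ∀ k, ∫⁻ ω, g k ω ∂μ ≤ ENNReal.ofReal (2 * (K * t)) := by
    intro k
    -- layer-cake bound
    have hpt : ∀ ω, g k ω ≤ ∑' j : ℕ,
        Set.indicator {ω | ζ k ω < (j + 1) * t} (fun _ => ENNReal.ofReal (Real.exp (-(2 * j)))) ω := by
      intro ω
      set j₀ : ℕ := ⌊ζ k ω / t⌋₊ with hj₀
      have h1 : ζ k ω < (j₀ + 1) * t := by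
        have := Nat.lt_floor_add_one (ζ k ω / t)
        calc ζ k ω = (ζ k ω / t) * t := by field_simp
          _ < (j₀ + 1) * t := by
            apply mul_lt_mul_of_pos_right _ htpos
            exact_mod_cast this
      have h2 : (j₀ : ℝ) ≤ ζ k ω / t := Nat.floor_le (div_nonneg (hnn k ω) htpos.le)
      have h3 : g k ω ≤ ENNReal.ofReal (Real.exp (-(2 * j₀))) := by
        apply ENNReal.ofReal_le_ofReal
        apply Real.exp_le_exp.2
        have : (2 : ℝ) * j₀ ≤ 2 * (ζ k ω / t) := by linarith
        have h4 : 2 * (ζ k ω / t) = 2 * ζ k ω / t := by ring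
        linarith [h4 ▸ this]
      refine h3.trans ?_
      have hmem : ω ∈ {ω | ζ k ω < (j₀ + 1) * t} := by
        simpa using h1
      calc ENNReal.ofReal (Real.exp (-(2 * j₀)))
          = Set.indicator {ω | ζ k ω < (j₀ + 1) * t}
              (fun _ => ENNReal.ofReal (Real.exp (-(2 * j₀)))) ω := by
            rw [Set.indicator_of_mem hmem]
        _ ≤ _ := ENNReal.le_tsum j₀
    have hsetmeas : ∀ j : ℕ, MeasurableSet {ω | ζ k ω < (j + 1) * t} :=
      fun j => measurableSet_lt (hmeas k) measurable_const
    calc ∫⁻ ω, g k ω ∂μ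
        ≤ ∫⁻ ω, ∑' j : ℕ, Set.indicator {ω | ζ k ω < (j + 1) * t}
            (fun _ => ENNReal.ofReal (Real.exp (-(2 * j)))) ω ∂μ := lintegral_mono hpt
      _ = ∑' j : ℕ, ∫⁻ ω, Set.indicator {ω | ζ k ω < (j + 1) * t}
            (fun _ => ENNReal.ofReal (Real.exp (-(2 * j)))) ω ∂μ := by
          apply lintegral_tsum
          intro j
          exact ((measurable_const.indicator (hsetmeas j))).aemeasurable
      _ = ∑' j : ℕ, ENNReal.ofReal (Real.exp (-(2 * j))) * μ {ω | ζ k ω < (j + 1) * t} := by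
          congr 1; funext j; exact lintegral_indicator_const (hsetmeas j) _
      _ ≤ ∑' j : ℕ, ENNReal.ofReal (K * t) * (ENNReal.ofReal 2⁻¹) ^ j := by
          apply ENNReal.tsum_le_tsum
          intro j
          have hb : μ {ω | ζ k ω < (j + 1) * t} ≤ ENNReal.ofReal (K * ((j + 1) * t)) := by
            apply hball
            calc t₀ ≤ t := ht
              _ = 1 * t := (one_mul t).symm
              _ ≤ (j + 1) * t := by
                apply mul_le_mul_of_nonneg_right _ htpos.le
                push_cast; linarith [Nat.cast_nonneg (α := ℝ) j]
          calc ENNReal.ofReal (Real.exp (-(2 * j))) * μ {ω | ζ k ω < (j + 1) * t}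
              ≤ ENNReal.ofReal (Real.exp (-(2 * j))) * ENNReal.ofReal (K * ((j + 1) * t)) :=
                mul_le_mul_right hb _
            _ = ENNReal.ofReal (Real.exp (-(2 * j)) * (K * ((j + 1) * t))) := by
                rw [ENNReal.ofReal_mul (Real.exp_pos _).le]
            _ ≤ ENNReal.ofReal ((K * t) * (2⁻¹) ^ j) := by
                apply ENNReal.ofReal_le_ofReal
                have key : Real.exp (-(2 * j)) * ((j : ℝ) + 1) ≤ (2⁻¹) ^ j := by
                  have h5 : (j : ℝ) + 1 ≤ Real.exp j := by
                    have := Real.add_one_le_exp (j : ℝ); linarith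
                  have h6 : Real.exp (-(2 * j)) * ((j : ℝ) + 1)
                      ≤ Real.exp (-(2 * j)) * Real.exp j :=
                    mul_le_mul_of_nonneg_left h5 (Real.exp_pos _).le
                  have h7 : Real.exp (-(2 * j)) * Real.exp j = Real.exp (-(j : ℝ)) := by
                    rw [← Real.exp_add]; ring_nf
                  have h8 : Real.exp (-(j : ℝ)) = (Real.exp (-1)) ^ j := by
                    rw [← Real.exp_nat_mul]; ring_nf
                  have h9 : Real.exp (-1) ≤ 2⁻¹ := by
                    rw [Real.exp_neg]
                    rw [inv_le_inv₀ (Real.exp_pos _) (by norm_num)]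
                    have := Real.add_one_le_exp (1 : ℝ); linarith
                  have h10 : (Real.exp (-1)) ^ j ≤ (2⁻¹ : ℝ) ^ j :=
                    pow_le_pow_left₀ (Real.exp_pos _).le h9 j
                  calc Real.exp (-(2 * j)) * ((j : ℝ) + 1) ≤ Real.exp (-(j : ℝ)) := by
                        rw [← h7]; exact h6
                    _ = (Real.exp (-1)) ^ j := h8
                    _ ≤ (2⁻¹ : ℝ) ^ j := h10
                calc Real.exp (-(2 * j)) * (K * ((j + 1) * t))
                    = (K * t) * (Real.exp (-(2 * j)) * ((j : ℝ) + 1)) := by ring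
                  _ ≤ (K * t) * (2⁻¹) ^ j := by
                      apply mul_le_mul_of_nonneg_left key (by positivity)
            _ = ENNReal.ofReal (K * t) * (ENNReal.ofReal 2⁻¹) ^ j := by
                rw [ENNReal.ofReal_mul (by positivity), ENNReal.ofReal_pow (by norm_num)]
      _ = ENNReal.ofReal (K * t) * ∑' j : ℕ, (ENNReal.ofReal 2⁻¹) ^ j := ENNReal.tsum_mul_left
      _ ≤ ENNReal.ofReal (2 * (K * t)) := by
          have h2inv : (ENNReal.ofReal 2⁻¹ : ENNReal) = 2⁻¹ := by
            rw [ENNReal.ofReal_inv_of_pos (by norm_num)]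
            norm_num
          rw [h2inv, ENNReal.tsum_geometric]
          have : (1 - 2⁻¹ : ENNReal)⁻¹ = 2 := by
            rw [ENNReal.one_sub_inv_two]; simp
          rw [this, ENNReal.ofReal_mul (by norm_num : (0:ℝ) ≤ 2), ENNReal.ofReal_ofNat,
            mul_comm]
  -- Step 2: the event is contained in a sublevel set of the product
  have hsub : {ω | ∑ k, ζ k ω ^ 2 < t ^ 2 * n} ⊆
      {ω | ENNReal.ofReal (Real.exp (2 * n))⁻¹ ≤ ∏ k, g k ω} := by
    intro ω hω
    simp only [Set.mem_setOf_eq] at hω ⊢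
    have hprodeq : ∏ k, g k ω = ENNReal.ofReal (Real.exp (-(∑ k, 2 * ζ k ω / t))) := by
      rw [← ENNReal.ofReal_prod_of_nonneg (fun i _ => (Real.exp_pos _).le)]
      congr 1
      rw [← Real.exp_sum]
      congr 1
      rw [← Finset.sum_neg_distrib]
    rw [hprodeq, ← Real.exp_neg]
    apply ENNReal.ofReal_le_ofReal
    apply Real.exp_le_exp.2
    have hsum : ∑ k, 2 * ζ k ω / t ≤ 2 * n := by
      have hterm : ∀ k : Fin n, 2 * ζ k ω / t ≤ ζ k ω ^ 2 / t ^ 2 + 1 := by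
        intro k
        have h0 : 0 ≤ (ζ k ω / t - 1) ^ 2 := sq_nonneg _
        have : (ζ k ω / t - 1) ^ 2 = ζ k ω ^ 2 / t ^ 2 - 2 * ζ k ω / t + 1 := by
          field_simp; ring
        nlinarith
      calc ∑ k, 2 * ζ k ω / t ≤ ∑ k : Fin n, (ζ k ω ^ 2 / t ^ 2 + 1) :=
            Finset.sum_le_sum fun k _ => hterm k
        _ = (∑ k, ζ k ω ^ 2) / t ^ 2 + n := by
            rw [Finset.sum_add_distrib, ← Finset.sum_div]
            simp
        _ ≤ n + n := by
            have : (∑ k, ζ k ω ^ 2) / t ^ 2 ≤ n := by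
              rw [div_le_iff₀ (by positivity)]
              linarith [hω]
            linarith
        _ = 2 * n := by ring
    linarith
  -- Step 3: Markov + independence
  set ε : ENNReal := ENNReal.ofReal (Real.exp (2 * n))⁻¹ with hε
  have hεpos : ε ≠ 0 := (ENNReal.ofReal_pos.2 (by positivity)).ne'
  have hεtop : ε ≠ ⊤ := ENNReal.ofReal_ne_top
  have hεinv : ε⁻¹ = ENNReal.ofReal (Real.exp (2 * n)) := by
    rw [hε, ENNReal.ofReal_inv_of_pos (Real.exp_pos _), inv_inv]
  have hFmeas : Measurable (fun ω => ∏ k, g k ω) :=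
    Finset.measurable_prod _ fun k _ => hgmeas k
  have hmarkov := mul_meas_ge_le_lintegral₀ (μ := μ) hFmeas.aemeasurable ε
  have hprod : ∫⁻ ω, ∏ k, g k ω ∂μ ≤ ENNReal.ofReal (2 * (K * t)) ^ n := by
    rw [aux_lintegral_prod g hgmeas hgindep]
    calc ∏ k, ∫⁻ ω, g k ω ∂μ ≤ ∏ _k : Fin n, ENNReal.ofReal (2 * (K * t)) :=
          Finset.prod_le_prod' fun k _ => hint k
      _ = ENNReal.ofReal (2 * (K * t)) ^ n := by
          rw [Finset.prod_const, Finset.card_univ, Fintype.card_fin]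
  calc μ {ω | ∑ k, ζ k ω ^ 2 < t ^ 2 * n}
      ≤ μ {ω | ε ≤ ∏ k, g k ω} := measure_mono hsub
    _ = ε⁻¹ * (ε * μ {ω | ε ≤ ∏ k, g k ω}) := by
        rw [← mul_assoc, ENNReal.inv_mul_cancel hεpos hεtop, one_mul]
    _ ≤ ε⁻¹ * ∫⁻ ω, ∏ k, g k ω ∂μ := mul_le_mul_right hmarkov _
    _ ≤ ε⁻¹ * ENNReal.ofReal (2 * (K * t)) ^ n := mul_le_mul_right hprod _
    _ = ENNReal.ofReal ((2 * Real.exp 2 * K * t) ^ n) := by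
        rw [hεinv, ← ENNReal.ofReal_pow (by positivity), ← ENNReal.ofReal_mul (by positivity)]
        congr 1
        rw [mul_comm (2:ℝ) (n:ℝ), Real.exp_nat_mul, ← mul_pow]
        ring_nf
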